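/- arXiv:0707.3860 — 3 statements merged into one kernel-verified Lean document; each statement's English description precedes it below -/
import Mathlib

section
/- (Vinokourov's example.) Let $(X_n)_{n\in\mathbf{Z}}$ be a stationary Markov chain on $\{-1,1\}$ with transition probabilities $p(1,1)=p(-1,-1)=p\in(0,1)$ and $p(1,-1)=p(-1,1)=1-p$, and set $V_{n+1}=X_n X_{n+1}$. Then: (a) the $V_n$ are i.i.d. of law $p\delta_1+(1-p)\delta_{-1}$, with $V_{n+1}$ independent of $\sigma(X_k:k\le n)$; (b) $X_n$ is independent of $\sigma(V_k:k\in\mathbf{Z})$ and uniformly distributed on $\{-1,1\}$; (c) $\sigma(X_k:k\le n)=\sigma(V_k:k\le n)\vee\sigma(X_n)$. -/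
open MeasureTheory ProbabilityTheory
open scoped ENNReal

/-- Vinokourov's example: let `(X_n)_{n ∈ ℤ}` be a stationary Markov chain
on `{-1, 1}` with transitions `p(1,1) = p(-1,-1) = p ∈ (0,1)`,
`p(1,-1) = p(-1,1) = 1 - p`, and set `V_{n+1} = X_n X_{n+1}`. Then:
(a) the `V_n` are i.i.d. of law `p δ_1 + (1-p) δ_{-1}`, and `V_{n+1}` is independent of
`σ(X_k : k ≤ n)`; (b) `X_n` is independent of `σ(V_k : k ∈ ℤ)` and uniform on `{-1,1}`;
(c) `σ(X_k : k ≤ n) = σ(V_k : k ≤ n) ⊔ σ(X_n)`. -/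
theorem stmt_15 {Ω : Type*} [MeasurableSpace Ω] (P : Measure Ω) [IsProbabilityMeasure P]
    (p : ℝ) (hp : 0 < p) (hp1 : p < 1)
    (X : ℤ → Ω → ℤ) (hXmeas : ∀ n, Measurable (X n))
    (hXval : ∀ n ω, X n ω = 1 ∨ X n ω = -1)
    (hmarg : ∀ n : ℤ, P {ω | X n ω = 1} = 2⁻¹)
    (hMarkov : ∀ n : ℤ, ∀ y : ℤ, y = 1 ∨ y = -1 →
      P[(Set.indicator {ω | X (n + 1) ω = y} fun _ => (1 : ℝ)) |
          ⨆ k : ℤ, ⨆ _ : k ≤ n, MeasurableSpace.comap (X k) inferInstance]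
        =ᵐ[P] fun ω => if X n ω = y then p else 1 - p)
    (V : ℤ → Ω → ℤ) (hVdef : ∀ n ω, V n ω = X (n - 1) ω * X n ω) :
    (iIndepFun V P ∧
      (∀ n : ℤ, P {ω | V n ω = 1} = ENNReal.ofReal p ∧
        P {ω | V n ω = -1} = ENNReal.ofReal (1 - p)) ∧
      ∀ n : ℤ, Indep (MeasurableSpace.comap (V (n + 1)) inferInstance)
        (⨆ k : ℤ, ⨆ _ : k ≤ n, MeasurableSpace.comap (X k) inferInstance) P) ∧
    (∀ n : ℤ, Indep (MeasurableSpace.comap (X n) inferInstance)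
        (⨆ k : ℤ, MeasurableSpace.comap (V k) inferInstance) P ∧
      P {ω | X n ω = 1} = 2⁻¹ ∧ P {ω | X n ω = -1} = 2⁻¹) ∧
    (∀ n : ℤ, (⨆ k : ℤ, ⨆ _ : k ≤ n, MeasurableSpace.comap (X k) inferInstance) =
      (⨆ k : ℤ, ⨆ _ : k ≤ n, MeasurableSpace.comap (V k) inferInstance) ⊔
        MeasurableSpace.comap (X n) inferInstance) := by
  classical
  set F : ℤ → MeasurableSpace Ω :=
    fun n => ⨆ k : ℤ, ⨆ _ : k ≤ n, MeasurableSpace.comap (X k) inferInstance with hFdef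
  have hVval : ∀ n ω, V n ω = 1 ∨ V n ω = -1 := by
    intro n ω; rw [hVdef]
    rcases hXval (n-1) ω with h1 | h1 <;> rcases hXval n ω with h2 | h2 <;> simp [h1, h2]
  have hVfun : ∀ n, V n = fun ω => X (n - 1) ω * X n ω := fun n => funext (hVdef n)
  have hVmeas : ∀ n, Measurable (V n) := by
    intro n; rw [hVfun]; exact (hXmeas (n-1)).mul (hXmeas n)
  have hXmeasF : ∀ k n : ℤ, k ≤ n → Measurable[F n] (X k) := by
    intro k n hk
    exact Measurable.of_comap_le
      (le_iSup₂ (f := fun k (_ : k ≤ n) => MeasurableSpace.comap (X k) inferInstance) k hk)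
  have hVmeasF : ∀ k n : ℤ, k ≤ n → Measurable[F n] (V k) := by
    intro k n hk; rw [hVfun]
    exact Measurable.mul (hXmeasF (k-1) n (by omega)) (hXmeasF k n hk)
  have hF_le : ∀ n, F n ≤ ‹MeasurableSpace Ω› :=
    fun n => iSup₂_le fun k _ => (hXmeas k).comap_le
  have hFmono : ∀ a b : ℤ, a ≤ b → F a ≤ F b := by
    intro a b hab
    exact iSup₂_le fun k hk =>
      le_iSup₂ (f := fun k (_ : k ≤ b) => MeasurableSpace.comap (X k) inferInstance) k (hk.trans hab)
  have hXev : ∀ (n y : ℤ), MeasurableSet {ω | X n ω = y} :=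
    fun n y => hXmeas n (measurableSet_singleton y)
  have hXevF : ∀ k n y : ℤ, k ≤ n → MeasurableSet[F n] {ω | X k ω = y} :=
    fun k n y hk => hXmeasF k n hk (measurableSet_singleton y)
  have hVevF : ∀ k n v : ℤ, k ≤ n → MeasurableSet[F n] {ω | V k ω = v} :=
    fun k n v hk => hVmeasF k n hk (measurableSet_singleton v)
  have hsplit : ∀ (A : Set Ω) (n : ℤ),
      P (A ∩ {ω | X n ω = 1}) + P (A ∩ {ω | X n ω = -1}) = P A := by
    intro A n
    have hd : A ∩ {ω | X n ω = -1} = A \ {ω | X n ω = 1} := by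
      ext ω; simp only [Set.mem_inter_iff, Set.mem_setOf_eq, Set.mem_diff]
      constructor
      · rintro ⟨h1, h2⟩; exact ⟨h1, by rw [h2]; decide⟩
      · rintro ⟨h1, h2⟩; exact ⟨h1, (hXval n ω).resolve_left h2⟩
    rw [hd, measure_inter_add_diff A (hXev n 1)]
  have hmargX : ∀ (N x : ℤ), x = 1 ∨ x = -1 → P {ω | X N ω = x} = 2⁻¹ := by
    intro N x hx
    rcases hx with rfl | rfl
    · exact hmarg N
    · have hc : {ω | X N ω = -1} = {ω | X N ω = 1}ᶜ := by
        ext ω; simp only [Set.mem_setOf_eq, Set.mem_compl_iff]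
        constructor
        · intro h h1; rw [h1] at h; exact absurd h (by decide)
        · intro h; exact (hXval N ω).resolve_left h
      rw [hc, measure_compl (hXev N 1) (measure_ne_top P _), measure_univ, hmarg N,
        ENNReal.one_sub_inv_two]
  -- continuation
  set q : ℤ → ℝ≥0∞ := fun v => if v = 1 then ENNReal.ofReal p else ENNReal.ofReal (1 - p)
    with hqdef
  have step : ∀ (n y z : ℤ), z = 1 ∨ z = -1 → ∀ A : Set Ω, MeasurableSet[F n] A →
      (∀ ω ∈ A, X n ω = y) →
      P (A ∩ {ω | X (n + 1) ω = z})
        = (if y = z then ENNReal.ofReal p else ENNReal.ofReal (1 - p)) * P A := by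
    intro n y z hz A hA hAy
    have hAm : MeasurableSet A := hF_le n A hA
    have hB : MeasurableSet {ω | X (n + 1) ω = z} := hXev _ z
    have hint : Integrable (Set.indicator {ω | X (n + 1) ω = z} fun _ => (1 : ℝ)) P :=
      (integrable_const (1 : ℝ)).indicator hB
    have h1 : ∫ ω in A, (P[Set.indicator {ω | X (n + 1) ω = z} fun _ => (1 : ℝ) | F n]) ω ∂P
        = ∫ ω in A, (Set.indicator {ω | X (n + 1) ω = z} fun _ => (1 : ℝ)) ω ∂P :=
      setIntegral_condExp (hF_le n) hint hA
    have h2 : ∫ ω in A, (P[Set.indicator {ω | X (n + 1) ω = z} fun _ => (1 : ℝ) | F n]) ω ∂P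
        = ∫ ω in A, (fun ω => if X n ω = z then p else 1 - p) ω ∂P :=
      setIntegral_congr_ae hAm ((hMarkov n z hz).mono fun ω hω _ => hω)
    have h3 : ∫ ω in A, (fun ω => if X n ω = z then p else 1 - p) ω ∂P
        = ∫ _ω in A, (if y = z then p else 1 - p) ∂P :=
      setIntegral_congr_fun hAm (fun ω hω => by simp only [hAy ω hω])
    have h4 : ∫ ω in A, (Set.indicator {ω | X (n + 1) ω = z} fun _ => (1 : ℝ)) ω ∂P
        = (P (A ∩ {ω | X (n + 1) ω = z})).toReal := by
      rw [setIntegral_indicator hB, setIntegral_const, smul_eq_mul, mul_one, Measure.real]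
    have h5 : ∫ _ω in A, (if y = z then p else 1 - p) ∂P
        = (if y = z then p else 1 - p) * (P A).toReal := by
      rw [setIntegral_const, smul_eq_mul, mul_comm, Measure.real]
    have hreal : (P (A ∩ {ω | X (n + 1) ω = z})).toReal
        = (if y = z then p else 1 - p) * (P A).toReal := by
      rw [← h4, ← h1, h2, h3, h5]
    have hc : (0:ℝ) ≤ if y = z then p else 1 - p := by split <;> linarith
    calc P (A ∩ {ω | X (n + 1) ω = z})
        = ENNReal.ofReal ((P (A ∩ {ω | X (n + 1) ω = z})).toReal) :=
          (ENNReal.ofReal_toReal (measure_ne_top P _)).symm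
      _ = ENNReal.ofReal ((if y = z then p else 1 - p) * (P A).toReal) := by rw [hreal]
      _ = ENNReal.ofReal (if y = z then p else 1 - p) * ENNReal.ofReal ((P A).toReal) :=
          ENNReal.ofReal_mul hc
      _ = (if y = z then ENNReal.ofReal p else ENNReal.ofReal (1 - p)) * P A := by
          rw [ENNReal.ofReal_toReal (measure_ne_top P A)]
          congr 1
          split <;> rfl
  have step2 : ∀ (n v : ℤ), v = 1 ∨ v = -1 → ∀ B : Set Ω, MeasurableSet[F n] B →
      P (B ∩ {ω | V (n + 1) ω = v}) = q v * P B := by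
    intro n v hv B hB
    have hVsplit : B ∩ {ω | V (n + 1) ω = v}
        = (B ∩ {ω | X n ω = 1}) ∩ {ω | X (n + 1) ω = v}
          ∪ (B ∩ {ω | X n ω = -1}) ∩ {ω | X (n + 1) ω = -v} := by
      ext ω
      simp only [Set.mem_inter_iff, Set.mem_setOf_eq, Set.mem_union]
      have hVv : V (n + 1) ω = X n ω * X (n + 1) ω := by
        rw [hVdef]; congr 2; ring
      constructor
      · rintro ⟨hωB, hV⟩
        rcases hXval n ω with h1 | h1
        · left; refine ⟨⟨hωB, h1⟩, ?_⟩; rw [hVv, h1, one_mul] at hV; exact hV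
        · right; refine ⟨⟨hωB, h1⟩, ?_⟩; rw [hVv, h1] at hV; omega
      · rintro (⟨⟨hωB, h1⟩, h2⟩ | ⟨⟨hωB, h1⟩, h2⟩)
        · exact ⟨hωB, by rw [hVv, h1, h2, one_mul]⟩
        · exact ⟨hωB, by rw [hVv, h1, h2]; ring⟩
    have hd : Disjoint ((B ∩ {ω | X n ω = 1}) ∩ {ω | X (n + 1) ω = v})
        ((B ∩ {ω | X n ω = -1}) ∩ {ω | X (n + 1) ω = -v}) := by
      refine Set.disjoint_left.2 ?_
      rintro ω ⟨⟨-, h1⟩, -⟩ ⟨⟨-, h2⟩, -⟩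
      simp only [Set.mem_setOf_eq] at h1 h2
      omega
    have hm2 : MeasurableSet ((B ∩ {ω | X n ω = -1}) ∩ {ω | X (n + 1) ω = -v}) :=
      ((hF_le n B hB).inter (hXev n (-1))).inter (hXev (n+1) (-v))
    rw [hVsplit, measure_union hd hm2]
    have e1 := step n 1 v hv (B ∩ {ω | X n ω = 1})
      (hB.inter (hXevF n n 1 le_rfl)) (fun ω hω => hω.2)
    have e2 := step n (-1) (-v) (by omega) (B ∩ {ω | X n ω = -1})
      (hB.inter (hXevF n n (-1) le_rfl)) (fun ω hω => hω.2)
    rw [e1, e2]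
    have hco1 : (if (1:ℤ) = v then ENNReal.ofReal p else ENNReal.ofReal (1 - p)) = q v := by
      rcases hv with rfl | rfl <;> simp [hqdef]
    have hco2 : (if (-1:ℤ) = -v then ENNReal.ofReal p else ENNReal.ofReal (1 - p)) = q v := by
      rcases hv with rfl | rfl <;> simp [hqdef]
    rw [hco1, hco2, ← mul_add, hsplit B n]
  have key2 : ∀ (c : ℕ) (s : Finset ℤ) (m : ℤ), s.card ≤ c → (∀ k ∈ s, m < k) →
      ∀ v : ℤ → ℤ, (∀ k ∈ s, v k = 1 ∨ v k = -1) → ∀ A : Set Ω, MeasurableSet[F m] A →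
      P (A ∩ ⋂ k ∈ s, {ω | V k ω = v k}) = P A * ∏ k ∈ s, q (v k) := by
    intro c
    induction c with
    | zero =>
      intro s m hcard _ v _ A _
      rw [Finset.card_eq_zero.1 (Nat.le_zero.1 hcard)]
      simp
    | succ c ih =>
      intro s m hcard hs v hv A hA
      rcases s.eq_empty_or_nonempty with rfl | hne
      · simp
      · set M := s.max' hne with hM
        have hMs : M ∈ s := s.max'_mem hne
        set s' := s.erase M with hs'
        have hlt : ∀ k ∈ s', k ≤ M - 1 := by
          intro k hk
          have h1 : k ≤ M := s.le_max' k (Finset.mem_of_mem_erase hk)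
          have h2 : k ≠ M := Finset.ne_of_mem_erase hk
          omega
        have hBmeas : MeasurableSet[F (M - 1)] (A ∩ ⋂ k ∈ s', {ω | V k ω = v k}) := by
          refine MeasurableSet.inter ?_ ?_
          · exact hFmono m (M - 1) (by have := hs M hMs; omega) A hA
          · exact MeasurableSet.biInter s'.countable_toSet
              (fun k hk => hVevF k (M - 1) (v k) (hlt k hk))
        have hsplitM : A ∩ ⋂ k ∈ s, {ω | V k ω = v k}
            = (A ∩ ⋂ k ∈ s', {ω | V k ω = v k}) ∩ {ω | V M ω = v M} := by
          conv_lhs => rw [← Finset.insert_erase hMs]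
          rw [Finset.set_biInter_insert, ← hs']
          rw [Set.inter_comm {ω | V M ω = v M} _, ← Set.inter_assoc]
        have hstep := step2 (M - 1) (v M) (hv M hMs) _ hBmeas
        rw [show M - 1 + 1 = M by ring] at hstep
        have hih := ih s' m (by rw [hs', Finset.card_erase_of_mem hMs]; omega)
          (fun k hk => hs k (Finset.mem_of_mem_erase hk)) v
          (fun k hk => hv k (Finset.mem_of_mem_erase hk)) A hA
        rw [hsplitM, hstep, hih, ← Finset.mul_prod_erase s _ hMs, ← hs']
        ring
  have keyV : ∀ (s : Finset ℤ) (v : ℤ → ℤ), (∀ k ∈ s, v k = 1 ∨ v k = -1) →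
      P (⋂ k ∈ s, {ω | V k ω = v k}) = ∏ k ∈ s, q (v k) := by
    intro s v hv
    rcases s.eq_empty_or_nonempty with rfl | hne
    · simp
    · have := key2 s.card s (s.min' hne - 1) le_rfl
        (fun k hk => by have := s.min'_le k hk; omega) v hv Set.univ MeasurableSet.univ
      rwa [Set.univ_inter, measure_univ, one_mul] at this
  have key1 : ∀ (d : ℕ) (N : ℤ) (s : Finset ℤ), (∀ k ∈ s, k ≤ N ∧ N - d < k) →
      ∀ x : ℤ, x = 1 ∨ x = -1 → ∀ v : ℤ → ℤ, (∀ k ∈ s, v k = 1 ∨ v k = -1) →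
      P ({ω | X N ω = x} ∩ ⋂ k ∈ s, {ω | V k ω = v k}) = 2⁻¹ * ∏ k ∈ s, q (v k) := by
    intro d
    induction d with
    | zero =>
      intro N s hks x hx v hv
      have hs : s = ∅ := by
        rcases s.eq_empty_or_nonempty with rfl | ⟨k, hk⟩
        · rfl
        · exact absurd (hks k hk) (by push_cast; omega)
      subst hs
      simp [hmargX N x hx]
    | succ d ih =>
      intro N s hks x hx v hv
      rcases s.eq_empty_or_nonempty with rfl | hne
      · simp [hmargX N x hx]
      by_cases hNs : N ∈ s
      · -- peel V N
        set s' := s.erase N with hs'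
        have hlt : ∀ k ∈ s', k ≤ N - 1 := by
          intro k hk
          have h1 := (hks k (Finset.mem_of_mem_erase hk)).1
          have h2 := Finset.ne_of_mem_erase hk
          omega
        have hxvN : x * v N = 1 ∨ x * v N = -1 := by
          rcases hx with rfl | rfl <;> rcases hv N hNs with h | h <;> rw [h] <;> norm_num
        set B := {ω | X (N - 1) ω = x * v N} ∩ ⋂ k ∈ s', {ω | V k ω = v k} with hBdef
        have hBmeas : MeasurableSet[F (N - 1)] B := by
          refine (hXevF (N-1) (N-1) _ le_rfl).inter ?_
          exact MeasurableSet.biInter s'.countable_toSet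
            (fun k hk => hVevF k (N - 1) (v k) (hlt k hk))
        have hsplitN : {ω | X N ω = x} ∩ ⋂ k ∈ s, {ω | V k ω = v k}
            = B ∩ {ω | X N ω = x} := by
          conv_lhs => rw [← Finset.insert_erase hNs]
          rw [Finset.set_biInter_insert, ← hs', hBdef]
          ext ω
          simp only [Set.mem_inter_iff, Set.mem_setOf_eq]
          have hVN : V N ω = X (N - 1) ω * X N ω := hVdef N ω
          constructor
          · rintro ⟨h1, h2, h3⟩
            refine ⟨⟨?_, h3⟩, h1⟩
            rw [h1] at hVN
            rcases hx with rfl | rfl <;> rcases hv N hNs with hvn | hvn <;>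
              rw [hvn] at h2 ⊢ <;> omega
          · rintro ⟨⟨h1, h3⟩, h2⟩
            refine ⟨h2, ?_, h3⟩
            rw [h2, h1] at hVN
            rcases hx with rfl | rfl <;> rcases hv N hNs with hvn | hvn <;>
              rw [hvn] at hVN ⊢ <;> omega
        have hstep := step (N - 1) (x * v N) x hx B hBmeas (fun ω hω => hω.1)
        rw [show N - 1 + 1 = N by ring] at hstep
        have hcoef : (if x * v N = x then ENNReal.ofReal p else ENNReal.ofReal (1 - p))
            = q (v N) := by
          rcases hx with rfl | rfl <;> rcases hv N hNs with hvn | hvn <;>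
            rw [hvn] <;> simp [hqdef]
        have hih := ih (N - 1) s'
          (fun k hk => ⟨hlt k hk, by have := (hks k (Finset.mem_of_mem_erase hk)).2; push_cast at this ⊢; omega⟩)
          (x * v N) hxvN v (fun k hk => hv k (Finset.mem_of_mem_erase hk))
        rw [hsplitN, hstep, hcoef, hih, ← Finset.mul_prod_erase s _ hNs, ← hs']
        ring
      · -- split on X (N-1)
        have hle : ∀ k ∈ s, k ≤ N - 1 := by
          intro k hk
          have := (hks k hk).1
          rcases eq_or_lt_of_le this with h | h
          · exact absurd (h ▸ hk) hNs
          · omega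
        have hR : MeasurableSet[F (N-1)] (⋂ k ∈ s, {ω | V k ω = v k}) :=
          MeasurableSet.biInter s.countable_toSet
            (fun k hk => hVevF k (N - 1) (v k) (hle k hk))
        have hsplitN : {ω | X N ω = x} ∩ ⋂ k ∈ s, {ω | V k ω = v k}
            = (({ω | X (N-1) ω = 1} ∩ ⋂ k ∈ s, {ω | V k ω = v k}) ∩ {ω | X N ω = x})
              ∪ (({ω | X (N-1) ω = -1} ∩ ⋂ k ∈ s, {ω | V k ω = v k}) ∩ {ω | X N ω = x}) := by
          ext ω
          simp only [Set.mem_inter_iff, Set.mem_setOf_eq, Set.mem_union]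
          constructor
          · rintro ⟨h1, h2⟩
            rcases hXval (N-1) ω with h | h
            · exact Or.inl ⟨⟨h, h2⟩, h1⟩
            · exact Or.inr ⟨⟨h, h2⟩, h1⟩
          · rintro (⟨⟨-, h2⟩, h1⟩ | ⟨⟨-, h2⟩, h1⟩) <;> exact ⟨h1, h2⟩
        have hdisj : Disjoint
            (({ω | X (N-1) ω = 1} ∩ ⋂ k ∈ s, {ω | V k ω = v k}) ∩ {ω | X N ω = x})
            (({ω | X (N-1) ω = -1} ∩ ⋂ k ∈ s, {ω | V k ω = v k}) ∩ {ω | X N ω = x}) := by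
          refine Set.disjoint_left.2 ?_
          rintro ω ⟨⟨h1, -⟩, -⟩ ⟨⟨h2, -⟩, -⟩
          simp only [Set.mem_setOf_eq] at h1 h2
          omega
        have hm2 : MeasurableSet
            (({ω | X (N-1) ω = -1} ∩ ⋂ k ∈ s, {ω | V k ω = v k}) ∩ {ω | X N ω = x}) :=
          ((hXev (N-1) (-1)).inter (hF_le (N-1) _ hR)).inter (hXev N x)
        have e1 := step (N - 1) 1 x hx ({ω | X (N-1) ω = 1} ∩ ⋂ k ∈ s, {ω | V k ω = v k})
          ((hXevF (N-1) (N-1) 1 le_rfl).inter hR) (fun ω hω => hω.1)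
        have e2 := step (N - 1) (-1) x hx ({ω | X (N-1) ω = -1} ∩ ⋂ k ∈ s, {ω | V k ω = v k})
          ((hXevF (N-1) (N-1) (-1) le_rfl).inter hR) (fun ω hω => hω.1)
        rw [show N - 1 + 1 = N by ring] at e1 e2
        have hih1 := ih (N - 1) s
          (fun k hk => ⟨hle k hk, by have := (hks k hk).2; push_cast at this ⊢; omega⟩)
          1 (Or.inl rfl) v hv
        have hih2 := ih (N - 1) s
          (fun k hk => ⟨hle k hk, by have := (hks k hk).2; push_cast at this ⊢; omega⟩)
          (-1) (Or.inr rfl) v hv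
        rw [hsplitN, measure_union hdisj hm2, e1, e2, hih1, hih2]
        have hsum : (if (1:ℤ) = x then ENNReal.ofReal p else ENNReal.ofReal (1 - p))
            + (if (-1:ℤ) = x then ENNReal.ofReal p else ENNReal.ofReal (1 - p)) = 1 := by
          have : ENNReal.ofReal p + ENNReal.ofReal (1 - p) = 1 := by
            rw [← ENNReal.ofReal_add (by linarith) (by linarith)]
            norm_num
          rcases hx with rfl | rfl
          · simpa using this
          · simp only [if_neg (by decide : ¬ (1:ℤ) = -1), if_pos rfl]
            rw [add_comm]; exact this
        calc (if (1:ℤ) = x then ENNReal.ofReal p else ENNReal.ofReal (1 - p))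
              * (2⁻¹ * ∏ k ∈ s, q (v k))
            + (if (-1:ℤ) = x then ENNReal.ofReal p else ENNReal.ofReal (1 - p))
              * (2⁻¹ * ∏ k ∈ s, q (v k))
            = ((if (1:ℤ) = x then ENNReal.ofReal p else ENNReal.ofReal (1 - p))
              + (if (-1:ℤ) = x then ENNReal.ofReal p else ENNReal.ofReal (1 - p)))
              * (2⁻¹ * ∏ k ∈ s, q (v k)) := by rw [add_mul]
          _ = 2⁻¹ * ∏ k ∈ s, q (v k) := by rw [hsum, one_mul]
  have key1' : ∀ (N : ℤ) (s : Finset ℤ), (∀ k ∈ s, k ≤ N) →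
      ∀ x : ℤ, x = 1 ∨ x = -1 → ∀ v : ℤ → ℤ, (∀ k ∈ s, v k = 1 ∨ v k = -1) →
      P ({ω | X N ω = x} ∩ ⋂ k ∈ s, {ω | V k ω = v k}) = 2⁻¹ * ∏ k ∈ s, q (v k) := by
    intro N s hks x hx v hv
    rcases s.eq_empty_or_nonempty with rfl | hne
    · simp [hmargX N x hx]
    · refine key1 ((N - s.min' hne).toNat + 1) N s (fun k hk => ⟨hks k hk, ?_⟩) x hx v hv
      have h1 := s.min'_le k hk
      have h2 := hks (s.min' hne) (s.min'_mem hne)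
      push_cast
      omega
  have key3 : ∀ (n x : ℤ), x = 1 ∨ x = -1 → ∀ (t : Finset ℤ) (v : ℤ → ℤ),
      (∀ k ∈ t, v k = 1 ∨ v k = -1) →
      P ({ω | X n ω = x} ∩ ⋂ k ∈ t, {ω | V k ω = v k}) = 2⁻¹ * ∏ k ∈ t, q (v k) := by
    intro n x hx t v hv
    have htu : t.filter (· ≤ n) ∪ t.filter (¬ · ≤ n) = t := Finset.filter_union_filter_not_eq _ t
    have hInter : (⋂ k ∈ t, {ω | V k ω = v k})
        = (⋂ k ∈ t.filter (· ≤ n), {ω | V k ω = v k})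
          ∩ ⋂ k ∈ t.filter (¬ · ≤ n), {ω | V k ω = v k} := by
      have hgen : ∀ (a b : Finset ℤ) (f : ℤ → Set Ω),
          ⋂ k ∈ a ∪ b, f k = (⋂ k ∈ a, f k) ∩ ⋂ k ∈ b, f k := by
        intro a b f; ext ω
        simp only [Set.mem_iInter, Set.mem_inter_iff, Finset.mem_union]
        exact ⟨fun h => ⟨fun k hk => h k (Or.inl hk), fun k hk => h k (Or.inr hk)⟩,
          fun h k hk => hk.elim (h.1 k) (h.2 k)⟩
      conv_lhs => rw [← htu]
      rw [hgen]
    have hA : MeasurableSet[F n]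
        ({ω | X n ω = x} ∩ ⋂ k ∈ t.filter (· ≤ n), {ω | V k ω = v k}) := by
      refine (hXevF n n x le_rfl).inter ?_
      exact MeasurableSet.biInter (Finset.countable_toSet _)
        (fun k hk => hVevF k n (v k) (Finset.mem_filter.1 hk).2)
    have h2 := key2 (t.filter (¬ · ≤ n)).card (t.filter (¬ · ≤ n)) n le_rfl
      (fun k hk => by have := (Finset.mem_filter.1 hk).2; omega) v
      (fun k hk => hv k (Finset.mem_filter.1 hk).1) _ hA
    have h1 := key1' n (t.filter (· ≤ n)) (fun k hk => (Finset.mem_filter.1 hk).2) x hx v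
      (fun k hk => hv k (Finset.mem_filter.1 hk).1)
    rw [hInter, ← Set.inter_assoc, h2, h1, mul_assoc,
      Finset.prod_filter_mul_prod_filter_not t (· ≤ n)]
  have piPair : ∀ (W : Ω → ℤ), IsPiSystem {({ω | W ω = 1} : Set Ω), {ω | W ω = -1}} := by
    intro W s hs t ht hne
    rcases hs with rfl | hs <;> rcases ht with rfl | ht
    · rw [Set.inter_self]; left; rfl
    · rw [Set.mem_singleton_iff] at ht; subst ht
      exfalso; obtain ⟨ω, h1, h2⟩ := hne
      simp only [Set.mem_setOf_eq] at h1 h2; omega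
    · rw [Set.mem_singleton_iff] at hs; subst hs
      exfalso; obtain ⟨ω, h1, h2⟩ := hne
      simp only [Set.mem_setOf_eq] at h1 h2; omega
    · rw [Set.mem_singleton_iff] at hs ht; subst hs; subst ht
      rw [Set.inter_self]; right; rfl
  have genW : ∀ (W : Ω → ℤ), Measurable W → (∀ ω, W ω = 1 ∨ W ω = -1) →
      MeasurableSpace.comap W inferInstance
        = MeasurableSpace.generateFrom {({ω | W ω = 1} : Set Ω), {ω | W ω = -1}} := by
    intro W hW hval
    refine le_antisymm ?_ (MeasurableSpace.generateFrom_le ?_)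
    · have hm : @Measurable Ω ℤ
          (MeasurableSpace.generateFrom {({ω | W ω = 1} : Set Ω), {ω | W ω = -1}}) _ W := by
        refine @measurable_to_countable' ℤ Ω _ _ (MeasurableSpace.generateFrom _) W
          (fun y => ?_)
        by_cases h1 : y = 1
        · subst h1
          exact MeasurableSpace.measurableSet_generateFrom (by left; rfl)
        by_cases h2 : y = -1
        · subst h2
          exact MeasurableSpace.measurableSet_generateFrom (by right; rfl)
        · have he : W ⁻¹' {y} = ∅ := by
            ext ω
            simp only [Set.mem_preimage, Set.mem_singleton_iff, Set.mem_empty_iff_false,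
              iff_false]
            intro h; rcases hval ω with hh | hh <;> rw [hh] at h <;> omega
          rw [he]
          exact @MeasurableSet.empty _ (MeasurableSpace.generateFrom _)
      exact hm.comap_le
    · rintro s (rfl | hs)
      · exact ⟨{1}, measurableSet_singleton 1, rfl⟩
      · rw [Set.mem_singleton_iff] at hs; subst hs
        exact ⟨{-1}, measurableSet_singleton (-1), rfl⟩
  have hVmarg : ∀ (n v : ℤ), v = 1 ∨ v = -1 → P {ω | V n ω = v} = q v := by
    intro n v hv
    have := keyV {n} (fun _ => v) (fun _ _ => hv)
    simpa using this
  refine ⟨⟨?_, ?_, ?_⟩, ?_, ?_⟩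
  · -- (a1) iIndepFun
    rw [iIndepFun_iff_iIndep]
    refine iIndepSets.iIndep (fun k => (hVmeas k).comap_le)
      (fun k => {({ω | V k ω = 1} : Set Ω), {ω | V k ω = -1}}) (fun k => piPair (V k))
      (fun k => genW (V k) (hVmeas k) (hVval k)) ?_
    rw [iIndepSets_iff]
    intro s f H
    set vv : ℤ → ℤ := fun i => if f i = {ω | V i ω = 1} then 1 else -1 with hvvdef
    have hfe : ∀ i ∈ s, f i = {ω | V i ω = vv i} := by
      intro i hi
      by_cases h : f i = {ω | V i ω = 1}
      · simp only [hvvdef, if_pos h]; exact h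
      · rcases H i hi with h1 | h1
        · exact absurd h1 h
        · rw [Set.mem_singleton_iff] at h1
          simp only [hvvdef, if_neg h]; exact h1
    have hvv : ∀ i ∈ s, vv i = 1 ∨ vv i = -1 := by
      intro i hi; by_cases h : f i = {ω | V i ω = 1} <;> simp [hvvdef, h]
    calc P (⋂ i ∈ s, f i) = P (⋂ i ∈ s, {ω | V i ω = vv i}) := by
          congr 1; exact Set.iInter₂_congr hfe
      _ = ∏ i ∈ s, q (vv i) := keyV s vv hvv
      _ = ∏ i ∈ s, P (f i) := Finset.prod_congr rfl
          (fun i hi => by rw [hfe i hi, hVmarg i (vv i) (hvv i hi)])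
  · -- (a2) marginals
    intro n
    constructor
    · rw [hVmarg n 1 (Or.inl rfl)]; simp [hqdef]
    · rw [hVmarg n (-1) (Or.inr rfl)]; norm_num [hqdef]
  · -- (a3) Indep of V (n+1) and F n
    intro n
    rw [Indep_iff]
    intro t1 t2 h1 h2
    obtain ⟨S, -, rfl⟩ := h1
    by_cases h1S : (1:ℤ) ∈ S <;> by_cases h2S : (-1:ℤ) ∈ S
    · have hu : V (n+1) ⁻¹' S = Set.univ := by
        ext ω
        simp only [Set.mem_preimage, Set.mem_univ, iff_true]
        rcases hVval (n+1) ω with h | h <;> rw [h] <;> assumption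
      rw [hu, Set.univ_inter, measure_univ, one_mul]
    · have hu : V (n+1) ⁻¹' S = {ω | V (n+1) ω = 1} := by
        ext ω
        simp only [Set.mem_preimage, Set.mem_setOf_eq]
        constructor
        · intro h
          rcases hVval (n+1) ω with hh | hh
          · exact hh
          · rw [hh] at h; exact absurd h h2S
        · intro h; rw [h]; exact h1S
      rw [hu, Set.inter_comm, step2 n 1 (Or.inl rfl) t2 h2,
        hVmarg (n+1) 1 (Or.inl rfl), mul_comm]
    · have hu : V (n+1) ⁻¹' S = {ω | V (n+1) ω = -1} := by
        ext ω
        simp only [Set.mem_preimage, Set.mem_setOf_eq]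
        constructor
        · intro h
          rcases hVval (n+1) ω with hh | hh
          · rw [hh] at h; exact absurd h h1S
          · exact hh
        · intro h; rw [h]; exact h2S
      rw [hu, Set.inter_comm, step2 n (-1) (Or.inr rfl) t2 h2,
        hVmarg (n+1) (-1) (Or.inr rfl), mul_comm]
    · have hu : V (n+1) ⁻¹' S = ∅ := by
        ext ω
        simp only [Set.mem_preimage, Set.mem_empty_iff_false, iff_false]
        intro h
        rcases hVval (n+1) ω with hh | hh <;> rw [hh] at h
        · exact h1S h
        · exact h2S h
      rw [hu, Set.empty_inter, measure_empty, zero_mul]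
  · -- (b)
    intro n
    refine ⟨?_, hmarg n, hmargX n (-1) (Or.inr rfl)⟩
    have hgen2 : (⨆ k : ℤ, MeasurableSpace.comap (V k) inferInstance)
        = MeasurableSpace.generateFrom
            (piiUnionInter (fun k => {({ω | V k ω = 1} : Set Ω), {ω | V k ω = -1}})
              Set.univ) := by
      refine le_antisymm (iSup_le fun k => ?_) (MeasurableSpace.generateFrom_le ?_)
      · rw [genW (V k) (hVmeas k) (hVval k)]
        exact MeasurableSpace.generateFrom_mono (subset_piiUnionInter
          (π := fun k => {({ω | V k ω = 1} : Set Ω), {ω | V k ω = -1}}) (Set.mem_univ k))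
      · rintro t ⟨ft, -, f, hf, rfl⟩
        refine MeasurableSet.biInter ft.countable_toSet (fun k hk => ?_)
        have hms : MeasurableSet[MeasurableSpace.comap (V k) inferInstance] (f k) := by
          rcases hf k hk with h | h
          · exact h ▸ ⟨{1}, measurableSet_singleton 1, rfl⟩
          · rw [Set.mem_singleton_iff] at h
            exact h ▸ ⟨{-1}, measurableSet_singleton (-1), rfl⟩
        exact le_iSup (fun k => MeasurableSpace.comap (V k) inferInstance) k _ hms
    refine IndepSets.indep (hXmeas n).comap_le (iSup_le fun k => (hVmeas k).comap_le)
      (piPair (X n)) (isPiSystem_piiUnionInter _ (fun k => piPair (V k)) _)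
      (genW (X n) (hXmeas n) (hXval n)) hgen2 ?_
    rw [IndepSets_iff]
    intro t1 t2 ht1 ht2
    obtain ⟨ft, -, f, hf, rfl⟩ := ht2
    set vv : ℤ → ℤ := fun i => if f i = {ω | V i ω = 1} then 1 else -1 with hvvdef
    have hfe : ∀ i ∈ ft, f i = {ω | V i ω = vv i} := by
      intro i hi
      by_cases h : f i = {ω | V i ω = 1}
      · simp only [hvvdef, if_pos h]; exact h
      · rcases hf i hi with h1 | h1
        · exact absurd h1 h
        · rw [Set.mem_singleton_iff] at h1
          simp only [hvvdef, if_neg h]; exact h1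
    have hvv : ∀ i ∈ ft, vv i = 1 ∨ vv i = -1 := by
      intro i hi; by_cases h : f i = {ω | V i ω = 1} <;> simp [hvvdef, h]
    have hIc : (⋂ i ∈ ft, f i) = ⋂ i ∈ ft, {ω | V i ω = vv i} := Set.iInter₂_congr hfe
    have main : ∀ x : ℤ, x = 1 ∨ x = -1 →
        P ({ω | X n ω = x} ∩ ⋂ i ∈ ft, f i)
          = P {ω | X n ω = x} * P (⋂ i ∈ ft, f i) := by
      intro x hx
      rw [hIc, key3 n x hx ft vv hvv, hmargX n x hx, keyV ft vv hvv]
    rcases ht1 with rfl | ht1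
    · exact main 1 (Or.inl rfl)
    · rw [Set.mem_singleton_iff] at ht1; subst ht1
      exact main (-1) (Or.inr rfl)
  · -- (c)
    intro n
    refine le_antisymm (iSup₂_le fun k hk => ?_) (sup_le ?_ ?_)
    · set G := (⨆ k : ℤ, ⨆ _ : k ≤ n, MeasurableSpace.comap (V k) inferInstance) ⊔
        MeasurableSpace.comap (X n) inferInstance with hG
      have hXnG : Measurable[G] (X n) := Measurable.of_comap_le le_sup_right
      have hVG : ∀ j : ℤ, j ≤ n → Measurable[G] (V j) := fun j hj =>
        Measurable.of_comap_le (le_trans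
          (le_iSup₂ (f := fun j (_ : j ≤ n) => MeasurableSpace.comap (V j) inferInstance) j hj)
          le_sup_left)
      have prodform : ∀ d : ℕ,
          X (n - (d:ℤ)) = fun ω => X n ω * ∏ j ∈ Finset.range d, V (n - (j:ℤ)) ω := by
        intro d
        induction d with
        | zero => simp
        | succ d ih =>
          funext ω
          have hsq : X (n - (d:ℤ)) ω * X (n - (d:ℤ)) ω = 1 := by
            rcases hXval (n - (d:ℤ)) ω with h | h <;> rw [h] <;> norm_num
          have h1 : X (n - (d:ℤ) - 1) ω = V (n - (d:ℤ)) ω * X (n - (d:ℤ)) ω := by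
            rw [hVdef (n - (d:ℤ)) ω, mul_assoc, hsq, mul_one]
          calc X (n - ((d+1:ℕ):ℤ)) ω = X (n - (d:ℤ) - 1) ω := by
                rw [show (n - ((d+1:ℕ):ℤ)) = n - (d:ℤ) - 1 by push_cast; ring]
            _ = V (n - (d:ℤ)) ω * X (n - (d:ℤ)) ω := h1
            _ = V (n - (d:ℤ)) ω * (X n ω * ∏ j ∈ Finset.range d, V (n - (j:ℤ)) ω) := by
                rw [congrFun ih ω]
            _ = X n ω * ∏ j ∈ Finset.range (d+1), V (n - (j:ℤ)) ω := by
                rw [Finset.prod_range_succ]; ring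
      have hd : k = n - (((n - k).toNat : ℕ) : ℤ) := by omega
      have hXk : Measurable[G] (X k) := by
        rw [hd, prodform (n - k).toNat]
        exact hXnG.mul (Finset.measurable_prod _ (fun j _ => hVG (n - (j:ℤ)) (by omega)))
      exact hXk.comap_le
    · exact iSup₂_le fun k hk => (hVmeasF k n hk).comap_le
    · exact (hXmeasF n n le_rfl).comap_le
end

section
/- Let $G$ be a compact group acting continuously on a Polish space $E$, and let $(X_n)_{n\in\mathbf{Z}}$ be a random walk $X_{n+1}=V_{n+1}\cdot X_n$ with i.i.d. $G$-valued innovations $V_n$ of law $\mu$ whose support is not contained in any coset of a proper closed normal subgroup, each $V_{n+1}$ independent of $((X_k,V_k))_{k\le n}$. Then the conditional law of $X_0$ given the asymptotic sigma-field $\mathcal{F}_{-\infty}$ is the uniform law on the orbit $G\cdot X_0$, i.e., the image of the Haar measure on $G$ under $g\mapsto g\cdot X_0$. -/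
set_option linter.unusedSectionVars false


open MeasureTheory ProbabilityTheory Filter
open scoped ENNReal Topology BoundedContinuousFunction

section StmtAux

variable {G : Type*} [Group G] [TopologicalSpace G] [IsTopologicalGroup G]
    [CompactSpace G] [SecondCountableTopology G] [MeasurableSpace G] [BorelSpace G]
    {E : Type*} [TopologicalSpace E] [PolishSpace E] [MeasurableSpace E] [BorelSpace E]
    [MulAction G E] [ContinuousSMul G E]

private lemma stmt16_prod_ofFn_continuous {n : ℕ} :
    Continuous fun v : Fin n → G => (List.ofFn v).prod := by
  have h : ∀ v : Fin n → G, (List.ofFn v).prod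
      = ((List.ofFn (fun i (w : Fin n → G) => w i)).map (fun f => f v)).prod := by
    intro v; rw [List.map_ofFn]; rfl
  simp only [h]
  apply continuous_list_prod
  intro f hf
  simp only [List.mem_ofFn] at hf
  obtain ⟨i, rfl⟩ := hf
  exact continuous_apply i

/-- integrability of `v ↦ ψ ((List.ofFn v).prod)` over the product measure. -/
private lemma stmt16_int_pi (μ : Measure G) [IsProbabilityMeasure μ] (ψ : G →ᵇ ℝ) (m : ℕ) :
    Integrable (fun v : Fin m → G => ψ ((List.ofFn v).prod))
      (Measure.pi fun _ : Fin m => μ) := by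
  refine (integrable_const ‖ψ‖).mono' ?_ ?_
  · exact (ψ.continuous.comp stmt16_prod_ofFn_continuous).aestronglyMeasurable
  · exact Eventually.of_forall fun v => ψ.norm_coe_le_norm _

/-- continuity of `x ↦ ∫ φ((ofFn v).prod • x) dμ^{⊗n}`. -/
private lemma stmt16_psi_cont (μ : Measure G) [IsProbabilityMeasure μ] (φ : E →ᵇ ℝ) (n : ℕ) :
    Continuous fun x : E =>
      ∫ v, φ ((List.ofFn v).prod • x) ∂(Measure.pi fun _ : Fin n => μ) := by
  apply continuous_of_dominated (bound := fun _ => ‖φ‖)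
  · intro x
    exact (φ.continuous.comp
      ((stmt16_prod_ofFn_continuous.smul continuous_const))).aestronglyMeasurable
  · intro x
    exact Eventually.of_forall fun v => φ.norm_coe_le_norm _
  · exact integrable_const _
  · exact Eventually.of_forall fun v => φ.continuous.comp (continuous_const_smul _)

private lemma stmt16_psi_bd (μ : Measure G) [IsProbabilityMeasure μ] (φ : E →ᵇ ℝ) (n : ℕ)
    (x : E) :
    |∫ v, φ ((List.ofFn v).prod • x) ∂(Measure.pi fun _ : Fin n => μ)| ≤ ‖φ‖ := by
  rw [← Real.norm_eq_abs]
  calc ‖∫ v, φ ((List.ofFn v).prod • x) ∂(Measure.pi fun _ : Fin n => μ)‖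
      ≤ ‖φ‖ * ((Measure.pi fun _ : Fin n => μ) Set.univ).toReal :=
        norm_integral_le_of_norm_le_const (Eventually.of_forall fun v => φ.norm_coe_le_norm _)
    _ = ‖φ‖ := by simp

private lemma stmt16_ofFn_snoc_prod {n : ℕ} (u : Fin n → G) (w : G) :
    (List.ofFn (Fin.snoc u w : Fin (n + 1) → G)).prod = (List.ofFn u).prod * w := by
  rw [List.ofFn_succ']
  simp

/-- the one-step recursion for the iterated convolution integral. -/
private lemma stmt16_psi_rec (μ : Measure G) [IsProbabilityMeasure μ] (φ : E →ᵇ ℝ) (n : ℕ)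
    (x : E) :
    ∫ v, φ ((List.ofFn v).prod • x) ∂(Measure.pi fun _ : Fin (n + 1) => μ)
      = ∫ w, ∫ v, φ ((List.ofFn v).prod • (w • x)) ∂(Measure.pi fun _ : Fin n => μ) ∂μ := by
  have hmp := measurePreserving_piFinSuccAbove (fun _ : Fin (n + 1) => μ) (Fin.last n)
  set e := MeasurableEquiv.piFinSuccAbove (fun _ : Fin (n + 1) => G) (Fin.last n) with he
  have h1 : ∫ v, φ ((List.ofFn v).prod • x) ∂(Measure.pi fun _ : Fin (n + 1) => μ)
      = ∫ p, φ ((List.ofFn (e.symm p)).prod • x)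
          ∂(μ.prod (Measure.pi fun _ : Fin n => μ)) := by
    rw [← hmp.integral_comp' (g := fun p => φ ((List.ofFn (e.symm p)).prod • x))]
    congr 1
    ext v
    rw [e.symm_apply_apply]
  have hsymm : ∀ p : G × (Fin n → G), e.symm p = Fin.snoc p.2 p.1 := by
    intro p
    show (Fin.insertNthEquiv (fun _ : Fin (n + 1) => G) (Fin.last n)) p = _
    simp [Fin.insertNthEquiv, Fin.insertNth_last']
  have h2 : ∀ p : G × (Fin n → G),
      φ ((List.ofFn (e.symm p)).prod • x) = φ ((List.ofFn p.2).prod • (p.1 • x)) := by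
    intro p
    rw [hsymm p, stmt16_ofFn_snoc_prod, mul_smul]
  rw [h1]
  simp only [h2]
  rw [integral_prod]
  refine (integrable_const ‖φ‖).mono' ?_ ?_
  · apply Continuous.aestronglyMeasurable
    exact φ.continuous.comp
      ((stmt16_prod_ofFn_continuous.comp continuous_snd).smul
        (continuous_fst.smul continuous_const))
  · exact Eventually.of_forall fun p => φ.norm_coe_le_norm _

/-- uniformity over right translates of the weak convergence to Haar measure. -/
private lemma stmt16_unif (haar : Measure G) [haar.IsHaarMeasure] [IsProbabilityMeasure haar]
    [haar.IsMulRightInvariant]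
    (μ : Measure G) [IsProbabilityMeasure μ]
    (hconv : ∀ φ : G →ᵇ ℝ,
      Tendsto (fun n : ℕ =>
          ∫ v, φ (List.ofFn v).prod ∂(Measure.pi fun _ : Fin n => μ))
        atTop (𝓝 (∫ g, φ g ∂haar)))
    (φ : E →ᵇ ℝ) (x : E) {ε : ℝ} (hε : 0 < ε) :
    ∀ᶠ n : ℕ in atTop, ∀ g : G,
      |(∫ v, φ ((List.ofFn v).prod • (g • x)) ∂(Measure.pi fun _ : Fin n => μ))
        - ∫ u, φ (u • x) ∂haar| < ε := by
  have hε3 : 0 < ε / 3 := by linarith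
  set χ : G → G →ᵇ ℝ := fun g =>
    φ.compContinuous ⟨fun u => (u * g) • x, ((continuous_mul_right g).smul continuous_const)⟩
    with hχdef
  have hχ : ∀ g u, χ g u = φ ((u * g) • x) := fun g u => rfl
  have hint : ∀ g, (∫ u, χ g u ∂haar) = ∫ u, φ (u • x) ∂haar := by
    intro g
    simp only [hχ]
    exact integral_mul_right_eq_self (fun u => φ (u • x)) g
  -- neighborhoods on which translates differ by at most ε/3
  have hnbhd : ∀ g₀ : G, ∃ N : Set G, N ∈ 𝓝 g₀ ∧
      ∀ g ∈ N, ∀ u : G, |φ ((u * g) • x) - φ ((u * g₀) • x)| < ε / 3 := by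
    intro g₀
    set U : Set (G × G) := {p | |φ ((p.1 * p.2) • x) - φ ((p.1 * g₀) • x)| < ε / 3} with hU
    have hUopen : IsOpen U := by
      have hc : Continuous fun p : G × G => |φ ((p.1 * p.2) • x) - φ ((p.1 * g₀) • x)| := by
        apply Continuous.abs
        apply Continuous.sub
        · exact φ.continuous.comp ((continuous_fst.mul continuous_snd).smul continuous_const)
        · exact φ.continuous.comp ((continuous_fst.mul continuous_const).smul continuous_const)
      exact isOpen_lt hc continuous_const
    have hsub : (Set.univ ×ˢ ({g₀} : Set G)) ⊆ U := by
      rintro ⟨u, g⟩ ⟨-, hg⟩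
      simp only [Set.mem_singleton_iff] at hg
      subst hg
      simp [hU, hε3]
    obtain ⟨u', v', _, hv'open, husub, hvsub, huv⟩ :=
      generalized_tube_lemma isCompact_univ isCompact_singleton hUopen hsub
    refine ⟨v', hv'open.mem_nhds (hvsub rfl), fun g hg u => ?_⟩
    exact huv (Set.mk_mem_prod (husub (Set.mem_univ u)) hg)
  choose N hNmem hNprop using hnbhd
  obtain ⟨T, hT⟩ := isCompact_univ.elim_nhds_subcover N (fun g₀ _ => hNmem g₀)
  have hTev : ∀ᶠ n : ℕ in atTop, ∀ g₀ ∈ T,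
      |(∫ v, χ g₀ ((List.ofFn v).prod) ∂(Measure.pi fun _ : Fin n => μ))
        - ∫ u, φ (u • x) ∂haar| < ε / 3 := by
    rw [eventually_all_finset]
    intro g₀ _
    have h := hconv (χ g₀)
    rw [hint g₀] at h
    exact h.eventually (eventually_abs_sub_lt _ hε3)
  filter_upwards [hTev] with n hn g
  have hgmem : g ∈ ⋃ g₀ ∈ T, N g₀ := hT.2 (Set.mem_univ g)
  simp only [Set.mem_iUnion, exists_prop] at hgmem
  obtain ⟨g₀, hg₀T, hgN⟩ := hgmem
  have hrw : (∫ v, φ ((List.ofFn v).prod • (g • x)) ∂(Measure.pi fun _ : Fin n => μ))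
      = ∫ v, χ g ((List.ofFn v).prod) ∂(Measure.pi fun _ : Fin n => μ) := by
    congr 1
    ext v
    rw [hχ, mul_smul]
  rw [hrw]
  have hdiff : |(∫ v, χ g ((List.ofFn v).prod) ∂(Measure.pi fun _ : Fin n => μ))
      - ∫ v, χ g₀ ((List.ofFn v).prod) ∂(Measure.pi fun _ : Fin n => μ)| ≤ ε / 3 := by
    rw [← integral_sub (stmt16_int_pi μ (χ g) n) (stmt16_int_pi μ (χ g₀) n),
      ← Real.norm_eq_abs]
    calc ‖∫ v, (χ g ((List.ofFn v).prod) - χ g₀ ((List.ofFn v).prod))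
          ∂(Measure.pi fun _ : Fin n => μ)‖
        ≤ (ε / 3) * ((Measure.pi fun _ : Fin n => μ) Set.univ).toReal := by
          apply norm_integral_le_of_norm_le_const
          refine Eventually.of_forall fun v => ?_
          rw [Real.norm_eq_abs, hχ, hχ]
          exact (hNprop g₀ g hgN _).le
      _ = ε / 3 := by simp
  have hg₀ := hn g₀ hg₀T
  have tri := abs_sub_le (∫ v, χ g ((List.ofFn v).prod) ∂(Measure.pi fun _ : Fin n => μ))
    (∫ v, χ g₀ ((List.ofFn v).prod) ∂(Measure.pi fun _ : Fin n => μ))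
    (∫ u, φ (u • x) ∂haar)
  linarith

end StmtAux

/-- for the random walk `X_{n+1} = V_{n+1} • X_n` on a Polish space `E`
under a continuous action of a compact group `G`, with i.i.d. innovations of law `μ`
whose convolution powers converge weakly to the Haar probability measure (equivalently,
whose support is contained in no coset of a proper closed normal subgroup), the
conditional law of `X₀` given the asymptotic σ-field `𝓕_{-∞}` is the uniform law on the
orbit `G ⬝ X₀`, i.e. the image of Haar measure under `g ↦ g • X₀`: for every bounded
continuous `φ`, `E[φ(X₀) | 𝓕_{-∞}] = ∫_G φ(g • X₀) dg` a.s. -/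
theorem stmt_16 {G : Type*} [Group G] [TopologicalSpace G] [IsTopologicalGroup G]
    [CompactSpace G] [SecondCountableTopology G] [MeasurableSpace G] [BorelSpace G]
    {E : Type*} [TopologicalSpace E] [PolishSpace E] [MeasurableSpace E] [BorelSpace E]
    [MulAction G E] [ContinuousSMul G E]
    (haar : Measure G) [haar.IsHaarMeasure] [IsProbabilityMeasure haar]
    {Ω : Type*} [MeasurableSpace Ω] (P : Measure Ω) [IsProbabilityMeasure P]
    (X : ℤ → Ω → E) (V : ℤ → Ω → G)
    (hX : ∀ n, Measurable (X n)) (hV : ∀ n, Measurable (V n))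
    (μ : Measure G) [IsProbabilityMeasure μ]
    (hlaw : ∀ n : ℤ, Measure.map (V n) P = μ)
    (hconv : ∀ φ : G →ᵇ ℝ,
      Tendsto (fun n : ℕ =>
          ∫ v, φ (List.ofFn v).prod ∂(Measure.pi fun _ : Fin n => μ))
        atTop (𝓝 (∫ g, φ g ∂haar)))
    (hrec : ∀ n : ℤ, ∀ ω, X (n + 1) ω = V (n + 1) ω • X n ω)
    (hindep : ∀ n : ℤ,
      Indep (MeasurableSpace.comap (V (n + 1)) inferInstance)
        (⨆ k : ℤ, ⨆ _ : k ≤ n,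
          MeasurableSpace.comap (X k) inferInstance ⊔
            MeasurableSpace.comap (V k) inferInstance) P) :
    ∀ φ : E →ᵇ ℝ,
      P[(fun ω => φ (X 0 ω)) |
          ⨅ n : ℤ, ⨆ k : ℤ, ⨆ _ : k ≤ n,
            MeasurableSpace.comap (X k) inferInstance ⊔
              MeasurableSpace.comap (V k) inferInstance]
        =ᵐ[P] fun ω => ∫ g, φ (g • X 0 ω) ∂haar := by
  intro φ
  -- notation
  set 𝓕 : ℤ → MeasurableSpace Ω := fun n => ⨆ k : ℤ, ⨆ _ : k ≤ n,
      MeasurableSpace.comap (X k) inferInstance ⊔ MeasurableSpace.comap (V k) inferInstance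
    with h𝓕
  -- right invariance of Haar measure (compact groups are unimodular)
  haveI hri : haar.IsMulRightInvariant := by
    constructor
    intro g
    haveI : IsProbabilityMeasure (Measure.map (· * g) haar) :=
      Measure.isProbabilityMeasure_map (measurable_mul_const g).aemeasurable
    exact Measure.isHaarMeasure_eq_of_isProbabilityMeasure _ _
  -- the target function
  set hfun : E → ℝ := fun x => ∫ g, φ (g • x) ∂haar with hhfun
  have hfun_cont : Continuous hfun := by
    apply continuous_of_dominated (bound := fun _ => ‖φ‖)
    · intro x
      exact (φ.continuous.comp (continuous_id.smul continuous_const)).aestronglyMeasurable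
    · intro x
      exact Eventually.of_forall fun g => φ.norm_coe_le_norm _
    · exact integrable_const _
    · exact Eventually.of_forall fun g => φ.continuous.comp (continuous_const_smul _)
  have hfun_bd : ∀ x, |hfun x| ≤ ‖φ‖ := by
    intro x
    rw [hhfun, ← Real.norm_eq_abs]
    calc ‖∫ g, φ (g • x) ∂haar‖ ≤ ‖φ‖ * (haar Set.univ).toReal :=
          norm_integral_le_of_norm_le_const (Eventually.of_forall fun g => φ.norm_coe_le_norm _)
      _ = ‖φ‖ := by simp
  have hfun_smul : ∀ (g : G) (x : E), hfun (g • x) = hfun x := by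
    intro g x
    rw [hhfun]
    simp only
    have h1 : ∀ u : G, φ (u • g • x) = φ ((u * g) • x) := fun u => by rw [mul_smul]
    simp only [h1]
    exact integral_mul_right_eq_self (fun u => φ (u • x)) g
  -- `hfun (X n ω)` does not depend on `n`
  have horb : ∀ (ω : Ω) (n : ℤ), hfun (X n ω) = hfun (X 0 ω) := by
    intro ω n
    induction n using Int.induction_on with
    | zero => rfl
    | succ k ih => rw [hrec k ω, hfun_smul, ih]
    | pred k ih =>
        have := hrec (-(k : ℤ) - 1) ω
        have h2 : -(k : ℤ) - 1 + 1 = -(k : ℤ) := by ring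
        rw [h2] at this
        rw [← ih, this, hfun_smul]
  -- `X (-n) ω` lies on the orbit of `X 0 ω`
  have horbit_pt : ∀ (ω : Ω) (n : ℕ), ∃ g : G, X (-(n : ℤ)) ω = g • X 0 ω := by
    intro ω n
    induction n with
    | zero => exact ⟨1, by simp⟩
    | succ k ih =>
        obtain ⟨g, hg⟩ := ih
        have h := hrec (-(k + 1 : ℕ) : ℤ) ω
        have h2 : (-(k + 1 : ℕ) : ℤ) + 1 = -(k : ℤ) := by push_cast; ring
        rw [h2] at h
        refine ⟨(V (-(k : ℤ)) ω)⁻¹ * g, ?_⟩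
        rw [mul_smul, ← hg, h, inv_smul_smul]
  -- basic measurability facts
  have hcomapX : ∀ k n : ℤ, k ≤ n → MeasurableSpace.comap (X k) inferInstance ≤ 𝓕 n := by
    intro k n hk
    exact le_iSup_of_le k (le_iSup_of_le hk le_sup_left)
  have hcomapV : ∀ k n : ℤ, k ≤ n → MeasurableSpace.comap (V k) inferInstance ≤ 𝓕 n := by
    intro k n hk
    exact le_iSup_of_le k (le_iSup_of_le hk le_sup_right)
  have hle : ∀ n : ℤ, 𝓕 n ≤ (inferInstance : MeasurableSpace Ω) := by
    intro n
    refine iSup_le fun k => iSup_le fun _ => sup_le ?_ ?_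
    · exact (hX k).comap_le
    · exact (hV k).comap_le
  have hminf : (⨅ n : ℤ, 𝓕 n) ≤ (inferInstance : MeasurableSpace Ω) :=
    le_trans (iInf_le _ 0) (hle 0)
  haveI : SigmaFinite (P.trim hminf) := by
    haveI := isFiniteMeasure_trim hminf (μ := P)
    infer_instance
  -- the iterated convolution integrals
  set Ψ : ℕ → E → ℝ := fun n x =>
    ∫ v, φ ((List.ofFn v).prod • x) ∂(Measure.pi fun _ : Fin n => μ) with hΨdef
  have hΨcont : ∀ n, Continuous (Ψ n) := fun n => stmt16_psi_cont μ φ n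
  have hΨbd : ∀ n x, |Ψ n x| ≤ ‖φ‖ := fun n x => stmt16_psi_bd μ φ n x
  have hΨ0 : ∀ x, Ψ 0 x = φ x := by
    intro x
    rw [hΨdef]
    simp only
    have h1 : ∀ v : Fin 0 → G, φ ((List.ofFn v).prod • x) = φ x := by
      intro v
      simp
    simp only [h1]
    simp
  have hΨrec : ∀ (n : ℕ) (x : E), Ψ (n + 1) x = ∫ w, Ψ n (w • x) ∂μ :=
    fun n x => stmt16_psi_rec μ φ n x
  -- the freezing step
  have hfreeze : ∀ (n : ℕ) (s : Set Ω), MeasurableSet[𝓕 (-(n + 1 : ℕ) : ℤ)] s →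
      ∫ ω in s, Ψ n (X (-(n : ℤ)) ω) ∂P = ∫ ω in s, Ψ (n + 1) (X (-(n + 1 : ℕ) : ℤ) ω) ∂P := by
    intro n s hs
    set m : ℤ := -(n + 1 : ℕ) with hm
    have hm1 : m + 1 = -(n : ℤ) := by rw [hm]; push_cast; ring
    set W : Ω → G := V (m + 1) with hWdef
    set Z : Ω → E := X m with hZdef
    have hXrw : ∀ ω, X (-(n : ℤ)) ω = W ω • Z ω := by
      intro ω; rw [← hm1]; exact hrec m ω
    set t : ℝ → ℝ := fun a => max 0 (min a 1) with htdef
    have htcont : Continuous t := continuous_const.max (continuous_id.min continuous_const)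
    have ht0 : t 0 = 0 := by norm_num [htdef]
    have ht1 : t 1 = 1 := by norm_num [htdef]
    have htbd : ∀ a, |t a| ≤ 1 := by
      intro a
      rw [abs_le]
      constructor
      · exact le_trans (by norm_num) (le_max_left _ _)
      · exact max_le (by norm_num) (le_trans (min_le_right _ _) le_rfl)
    set Y : Ω → E × ℝ := fun ω => (Z ω, s.indicator (fun _ => (1 : ℝ)) ω) with hYdef
    have hYmG : Measurable[𝓕 m] Y := by
      refine Measurable.prodMk ?_ ?_
      · exact measurable_iff_comap_le.2 (hcomapX m m le_rfl)
      · exact measurable_const.indicator hs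
    have hYm : Measurable Y := hYmG.mono (hle m) le_rfl
    have hWm : Measurable W := hV _
    have hIndep : IndepFun Y W P := by
      have h := hindep m
      have h2 : MeasurableSpace.comap Y inferInstance ≤ 𝓕 m := measurable_iff_comap_le.1 hYmG
      exact (indep_of_indep_of_le_right h h2).symm
    haveI : IsProbabilityMeasure (P.map Y) := Measure.isProbabilityMeasure_map hYm.aemeasurable
    have hmap : P.map (fun ω => (Y ω, W ω)) = (P.map Y).prod μ := by
      rw [← hlaw (m + 1)]
      exact (indepFun_iff_map_prod_eq_prod_map_map hYm.aemeasurable (hV _).aemeasurable).1 hIndep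
    set f : (E × ℝ) × G → ℝ := fun p => t p.1.2 * Ψ n (p.2 • p.1.1) with hfdef
    have hfc : Continuous f := by
      apply Continuous.mul
      · exact htcont.comp (continuous_snd.comp continuous_fst)
      · exact (hΨcont n).comp (continuous_snd.smul (continuous_fst.comp continuous_fst))
    have hfbd : ∀ p, ‖f p‖ ≤ ‖φ‖ := by
      intro p
      rw [hfdef, Real.norm_eq_abs]
      simp only
      rw [abs_mul]
      calc |t p.1.2| * |Ψ n (p.2 • p.1.1)| ≤ 1 * ‖φ‖ :=
            mul_le_mul (htbd _) (hΨbd _ _) (abs_nonneg _) zero_le_one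
        _ = ‖φ‖ := one_mul _
    have hsm : MeasurableSet s := hle m _ hs
    have e1 : ∫ ω in s, Ψ n (X (-(n : ℤ)) ω) ∂P = ∫ ω, f (Y ω, W ω) ∂P := by
      rw [← integral_indicator hsm]
      congr 1
      ext ω
      by_cases hω : ω ∈ s
      · simp only [Set.indicator_of_mem hω, hfdef, hYdef, hXrw ω, ht1]
        rw [one_mul]
      · simp only [Set.indicator_of_notMem hω, hfdef, hYdef, ht0]
        rw [zero_mul]
    have e2 : ∫ p, f p ∂((P.map Y).prod μ) = ∫ ω, f (Y ω, W ω) ∂P := by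
      rw [← hmap]
      exact integral_map (hYm.prodMk hWm).aemeasurable hfc.aestronglyMeasurable
    have hfint : Integrable f ((P.map Y).prod μ) :=
      (integrable_const ‖φ‖).mono' hfc.aestronglyMeasurable (Eventually.of_forall hfbd)
    have e3 : ∫ p, f p ∂((P.map Y).prod μ) = ∫ y, t y.2 * Ψ (n + 1) y.1 ∂(P.map Y) := by
      rw [integral_prod f hfint]
      congr 1
      ext y
      have : ∀ w : G, f (y, w) = t y.2 * Ψ n (w • y.1) := fun w => rfl
      simp only [this]
      rw [integral_const_mul, ← hΨrec n y.1]
    have e4 : ∫ y, t y.2 * Ψ (n + 1) y.1 ∂(P.map Y)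
        = ∫ ω, t (s.indicator (fun _ => (1 : ℝ)) ω) * Ψ (n + 1) (Z ω) ∂P := by
      rw [integral_map hYm.aemeasurable]
      exact ((htcont.comp continuous_snd).mul
        ((hΨcont (n + 1)).comp continuous_fst)).aestronglyMeasurable
    have e5 : ∫ ω, t (s.indicator (fun _ => (1 : ℝ)) ω) * Ψ (n + 1) (Z ω) ∂P
        = ∫ ω in s, Ψ (n + 1) (Z ω) ∂P := by
      rw [← integral_indicator hsm]
      congr 1
      ext ω
      by_cases hω : ω ∈ s
      · simp only [Set.indicator_of_mem hω, ht1, one_mul]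
      · simp only [Set.indicator_of_notMem hω, ht0, zero_mul]
    rw [e1, ← e2, e3, e4, e5]
  -- iterate the freezing step
  have hkey : ∀ (s : Set Ω), MeasurableSet[⨅ n : ℤ, 𝓕 n] s → ∀ n : ℕ,
      ∫ ω in s, φ (X 0 ω) ∂P = ∫ ω in s, Ψ n (X (-(n : ℤ)) ω) ∂P := by
    intro s hs n
    have hs' : ∀ m : ℤ, MeasurableSet[𝓕 m] s := fun m => MeasurableSpace.measurableSet_iInf.1 hs m
    induction n with
    | zero =>
        have : ∀ ω, Ψ 0 (X (-(0 : ℕ) : ℤ) ω) = φ (X 0 ω) := by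
          intro ω
          rw [hΨ0]
          norm_num
        simp only [this]
    | succ k ih =>
        rw [ih, hfreeze k s (hs' _)]
  -- convergence of the error terms
  have hAtend : Tendsto
      (fun n : ℕ => ∫ ω, |Ψ n (X (-(n : ℤ)) ω) - hfun (X (-(n : ℤ)) ω)| ∂P) atTop (𝓝 0) := by
    have h := tendsto_integral_of_dominated_convergence (μ := P)
      (F := fun n ω => |Ψ n (X (-(n : ℤ)) ω) - hfun (X (-(n : ℤ)) ω)|)
      (f := fun _ => (0 : ℝ)) (fun _ => 2 * ‖φ‖)
      (fun n => ((((hΨcont n).measurable.comp (hX _)).sub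
        (hfun_cont.measurable.comp (hX _))).abs).aestronglyMeasurable)
      (integrable_const _)
      (fun n => Eventually.of_forall fun ω => by
        rw [Real.norm_eq_abs, abs_abs]
        have h1 := hΨbd n (X (-(n : ℤ)) ω)
        have h2 := hfun_bd (X (-(n : ℤ)) ω)
        have h3 : |Ψ n (X (-(n : ℤ)) ω) - hfun (X (-(n : ℤ)) ω)|
            ≤ |Ψ n (X (-(n : ℤ)) ω)| + |hfun (X (-(n : ℤ)) ω)| := by
          have h4 := abs_sub_le (Ψ n (X (-(n : ℤ)) ω)) 0 (hfun (X (-(n : ℤ)) ω))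
          simpa using h4
        show _ ≤ 2 * ‖φ‖
        linarith)
      (Eventually.of_forall fun ω => by
        refine NormedAddCommGroup.tendsto_nhds_zero.2 fun ε hε => ?_
        filter_upwards [stmt16_unif haar μ hconv φ (X 0 ω) hε] with n hn
        obtain ⟨g, hg⟩ := horbit_pt ω n
        rw [Real.norm_eq_abs, abs_abs, hg, hfun_smul g (X 0 ω)]
        exact hn g)
    simpa using h
  -- set-integral identity on the tail σ-algebra
  have hseteq : ∀ (s : Set Ω), MeasurableSet[⨅ n : ℤ, 𝓕 n] s →
      ∫ ω in s, hfun (X 0 ω) ∂P = ∫ ω in s, φ (X 0 ω) ∂P := by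
    intro s hs
    have hFint : ∀ n : ℕ, Integrable (fun ω => Ψ n (X (-(n : ℤ)) ω)) P := by
      intro n
      refine (integrable_const ‖φ‖).mono' ?_ ?_
      · exact ((hΨcont n).measurable.comp (hX _)).aestronglyMeasurable
      · exact Eventually.of_forall fun ω => by rw [Real.norm_eq_abs]; exact hΨbd _ _
    have hGint : ∀ n : ℤ, Integrable (fun ω => hfun (X n ω)) P := by
      intro n
      refine (integrable_const ‖φ‖).mono' ?_ ?_
      · exact (hfun_cont.measurable.comp (hX _)).aestronglyMeasurable
      · exact Eventually.of_forall fun ω => by rw [Real.norm_eq_abs]; exact hfun_bd _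
    have habs : ∀ n : ℕ,
        |(∫ ω in s, φ (X 0 ω) ∂P) - ∫ ω in s, hfun (X 0 ω) ∂P|
          ≤ ∫ ω, |Ψ n (X (-(n : ℤ)) ω) - hfun (X (-(n : ℤ)) ω)| ∂P := by
      intro n
      have h1 := hkey s hs n
      have h2 : ∫ ω in s, hfun (X 0 ω) ∂P = ∫ ω in s, hfun (X (-(n : ℤ)) ω) ∂P := by
        apply integral_congr_ae
        exact Eventually.of_forall fun ω => (horb ω (-(n : ℤ))).symm
      rw [h1, h2, ← integral_sub ((hFint n).integrableOn) ((hGint _).integrableOn)]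
      calc |∫ ω in s, (Ψ n (X (-(n : ℤ)) ω) - hfun (X (-(n : ℤ)) ω)) ∂P|
          ≤ ∫ ω in s, |Ψ n (X (-(n : ℤ)) ω) - hfun (X (-(n : ℤ)) ω)| ∂P := by
            rw [← Real.norm_eq_abs]
            exact (norm_integral_le_integral_norm _).trans (le_of_eq (by simp [Real.norm_eq_abs]))
        _ ≤ ∫ ω, |Ψ n (X (-(n : ℤ)) ω) - hfun (X (-(n : ℤ)) ω)| ∂P := by
            apply setIntegral_le_integral
            · exact ((hFint n).sub (hGint _)).abs
            · exact Eventually.of_forall fun ω => abs_nonneg _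
    have hle0 : |(∫ ω in s, φ (X 0 ω) ∂P) - ∫ ω in s, hfun (X 0 ω) ∂P| ≤ 0 :=
      ge_of_tendsto' hAtend habs
    have := abs_nonneg ((∫ ω in s, φ (X 0 ω) ∂P) - ∫ ω in s, hfun (X 0 ω) ∂P)
    have h0 : (∫ ω in s, φ (X 0 ω) ∂P) - ∫ ω in s, hfun (X 0 ω) ∂P = 0 := by
      rw [← abs_eq_zero]; linarith
    linarith
  -- conclusion by uniqueness of conditional expectation
  have hint_f : Integrable (fun ω => φ (X 0 ω)) P := by
    refine (integrable_const ‖φ‖).mono' ?_ ?_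
    · exact (φ.continuous.measurable.comp (hX 0)).aestronglyMeasurable
    · exact Eventually.of_forall fun ω => φ.norm_coe_le_norm _
  have hg_meas : StronglyMeasurable[⨅ n : ℤ, 𝓕 n] fun ω => hfun (X 0 ω) := by
    apply Measurable.stronglyMeasurable
    intro t ht
    rw [MeasurableSpace.measurableSet_iInf]
    intro n
    have heq : (fun ω => hfun (X 0 ω)) ⁻¹' t = X n ⁻¹' (hfun ⁻¹' t) := by
      ext ω
      simp [Set.mem_preimage, horb ω n]
    rw [heq]
    exact hcomapX n n le_rfl _ ⟨hfun ⁻¹' t, hfun_cont.measurable ht, rfl⟩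
  have hg_int : Integrable (fun ω => hfun (X 0 ω)) P := by
    refine (integrable_const ‖φ‖).mono' ?_ ?_
    · exact ((hg_meas.mono hminf).aestronglyMeasurable)
    · exact Eventually.of_forall fun ω => by
        rw [Real.norm_eq_abs]; exact hfun_bd _
  have := ae_eq_condExp_of_forall_setIntegral_eq (μ := P) hminf hint_f
    (fun s _ _ => hg_int.integrableOn)
    (fun s hs _ => hseteq s hs)
    ⟨fun ω => hfun (X 0 ω), hg_meas, EventuallyEq.rfl⟩
  exact this.symm
end

section
/- (Counterexample to necessity of Rosenblatt's condition on an infinite state space.) Let $E=\mathbf{N}$, $f_1(x)=\max(x-1,0)$ and $f_2(x)=x+1$. Then: (a) no finite composition of $f_1$'s and $f_2$'s is a constant map on $\mathbf{N}$; (b) for every $l\ge 1$, the iterate $f_1^l$ maps $\{0,1,\dots,l\}$ to $\{0\}$; hence for i.i.d. innovations $V_n$ with $P[V_n=1]=2/3$, $P[V_n=2]=1/3$, any two states $x,y\in\mathbf{N}$ are accordable, i.e., there is $l$ with $P[f_{V_l}\circ\cdots\circ f_{V_1}(x)=f_{V_l}\circ\cdots\circ f_{V_1}(y)]>0$. -/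
open MeasureTheory
open scoped ENNReal

/-- counterexample to the necessity of Rosenblatt's condition on an
infinite state space: on `E = ℕ`, with `f₁ x = max (x-1) 0` and `f₂ x = x + 1`,
(a) no finite composition of `f₁`'s and `f₂`'s is constant; (b) `f₁^[l]` maps
`{0,…,l}` to `{0}`; hence, for i.i.d. innovations of law `β` with `β{1} = 2/3` and
`β{2} = 1/3`, any two states are accordable: some random composition merges them
with positive probability. -/
theorem stmt_18 (f : Fin 2 → ℕ → ℕ)
    (hf1 : f 0 = fun x => x - 1) (hf2 : f 1 = fun x => x + 1)
    (β : Measure (Fin 2)) [IsProbabilityMeasure β]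
    (hβ1 : β {0} = 2/3) (hβ2 : β {1} = 1/3) :
    (∀ vs : List (Fin 2), ¬ ∃ c : ℕ, ∀ x : ℕ, vs.foldl (fun a i => f i a) x = c) ∧
    (∀ l : ℕ, ∀ x ≤ l, (f 0)^[l] x = 0) ∧
    (∀ x y : ℕ, ∃ l : ℕ, 0 < l ∧
      0 < Measure.pi (fun _ : Fin l => β)
        {v : Fin l → Fin 2 |
          (List.ofFn v).foldl (fun a i => f i a) x =
            (List.ofFn v).foldl (fun a i => f i a) y}) := by
  -- lower bound lemma
  have hlow : ∀ (vs : List (Fin 2)) (x : ℕ),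
      x - vs.length ≤ vs.foldl (fun a i => f i a) x := by
    intro vs
    induction vs with
    | nil => intro x; simp
    | cons i t ih =>
      intro x
      have h1 : x - 1 ≤ f i x := by
        fin_cases i <;> simp [hf1, hf2] <;> omega
      calc x - (i :: t).length = (x - 1) - t.length := by simp; omega
        _ ≤ f i x - t.length := by omega
        _ ≤ _ := ih (f i x)
  -- constant-zero lemma
  have hzero : ∀ (vs : List (Fin 2)) (x : ℕ), (∀ i ∈ vs, i = 0) →
      vs.foldl (fun a i => f i a) x = x - vs.length := by
    intro vs
    induction vs with
    | nil => intro x _; simp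
    | cons i t ih =>
      intro x h
      have hi : i = 0 := h i (by simp)
      subst hi
      have := ih (f 0 x) (fun j hj => h j (by simp [hj]))
      simp only [List.foldl_cons]
      rw [hf1] at this ⊢
      simp only [List.length_cons] at this ⊢
      omega
  refine ⟨?_, ?_, ?_⟩
  · rintro vs ⟨c, hc⟩
    have h1 := hlow vs (c + vs.length + 1)
    rw [hc] at h1
    omega
  · intro l x hx
    have : ∀ x l : ℕ, (f 0)^[l] x = x - l := by
      intro x l
      induction l generalizing x with
      | zero => simp
      | succ n ih =>
        rw [Function.iterate_succ_apply, ih, hf1]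
        simp; omega
    rw [this]; omega
  · intro x y
    refine ⟨max x y + 1, by omega, ?_⟩
    set l := max x y + 1
    have hsub : (Set.univ.pi fun _ : Fin l => ({0} : Set (Fin 2))) ⊆
        {v : Fin l → Fin 2 |
          (List.ofFn v).foldl (fun a i => f i a) x =
            (List.ofFn v).foldl (fun a i => f i a) y} := by
      intro v hv
      have hall : ∀ i ∈ List.ofFn v, i = 0 := by
        intro i hi
        rw [List.mem_ofFn] at hi
        obtain ⟨j, rfl⟩ := hi
        exact hv j (Set.mem_univ j)
      have hx := hzero (List.ofFn v) x hall
      have hy := hzero (List.ofFn v) y hall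
      simp only [Set.mem_setOf_eq, hx, hy, List.length_ofFn]
      omega
    have hpi : Measure.pi (fun _ : Fin l => β)
        (Set.univ.pi fun _ : Fin l => ({0} : Set (Fin 2))) = (2/3 : ℝ≥0∞) ^ l := by
      rw [Measure.pi_pi]
      simp [hβ1]
    have hpos : (0 : ℝ≥0∞) < (2/3 : ℝ≥0∞) ^ l := by
      apply ENNReal.pow_pos
      simp [ENNReal.div_pos_iff]
    calc (0 : ℝ≥0∞) < (2/3 : ℝ≥0∞) ^ l := hpos
      _ = _ := hpi.symm
      _ ≤ _ := measure_mono hsub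
end
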